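/- The polynomials G_n defined by G_n(z) := 2^{-n} Σ_{j=0}^{⌊(n−1)/2⌋} C(n,j) z^{n−2j} (with G_0 = 0) satisfy the recurrence G_{n+1}(z) = φ(z) G_n(z) + (z a_n)/2 − a_{n+1}/2 for all n ≥ 0 and all z ≠ 0, where φ(z) = (z + 1/z)/2 and a_n := 2^{-n} C(n, n/2) for n even, a_n := 0 for n odd. -/

import Mathlib

/-- The Zhoukowsky map. -/
noncomputable def phi (z : ℂ) : ℂ := (z + z⁻¹) / 2

/-- `a n = binomial(n, n/2)/2^n` for even `n`, and `0` for odd `n`. -/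
noncomputable def a (n : ℕ) : ℂ := if Even n then (n.choose (n / 2) : ℂ) / 2 ^ n else 0

/-- `G 0 = 0` and `G n z = 2^{-n} Σ_{j=0}^{⌊(n-1)/2⌋} C(n,j) z^{n-2j}` for `n ≥ 1`. -/
noncomputable def G (n : ℕ) (z : ℂ) : ℂ :=
  if n = 0 then 0 else
    (1 / 2 ^ n) * ∑ j ∈ Finset.range ((n - 1) / 2 + 1), (n.choose j : ℂ) * z ^ (n - 2 * j)

lemma key (m k : ℕ) (z : ℂ) :
    ∑ j ∈ Finset.range (k+1), ((m+1).choose j : ℂ) * z ^ (m + 2 - 2*j) =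
    (∑ j ∈ Finset.range (k+1), (m.choose j : ℂ) * z ^ (m + 2 - 2*j))
    + ∑ j ∈ Finset.range k, (m.choose j : ℂ) * z ^ (m - 2*j) := by
  rw [Finset.sum_range_succ' (fun j => ((m+1).choose j : ℂ) * z ^ (m + 2 - 2*j)),
      Finset.sum_range_succ' (fun j => ((m).choose j : ℂ) * z ^ (m + 2 - 2*j))]
  have h : ∀ j : ℕ, m + 2 - 2*(j+1) = m - 2*j := by omega
  simp only [h, Nat.choose_succ_succ, Nat.choose_zero_right]
  push_cast
  simp only [Nat.succ_eq_add_one, add_mul]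
  rw [Finset.sum_add_distrib]
  ring

theorem stmt_10 (n : ℕ) (z : ℂ) (hz : z ≠ 0) :
    G (n + 1) z = phi z * G n z + z * a n / 2 - a (n + 1) / 2 := by
  rcases n with _ | m
  · simp [G, phi, a]
    ring
  rcases Nat.even_or_odd m with ⟨k, hk⟩ | ⟨k, hk⟩
  · -- m = 2k, so goal is about G (2k+2), G (2k+1)
    subst hk
    have hk2 : k + k = 2*k := by ring
    rw [hk2]
    have he1 : ¬ Even (2*k+1) := by simp [Nat.even_iff]
    have he2 : Even (2*k+1+1) := ⟨k+1, by ring⟩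
    have hr1 : (2*k+1+1-1)/2 + 1 = k+1 := by omega
    have hr2 : (2*k+1-1)/2 + 1 = k+1 := by omega
    have hd : (2*k+1+1)/2 = k+1 := by omega
    simp only [G, a, if_neg (by omega : ¬ (2*k+1+1 = 0)), if_neg (by omega : ¬ (2*k+1 = 0)),
      if_neg he1, if_pos he2, hr1, hr2, hd, phi]
    -- main sum identity
    have hc : ((2*k+1+1).choose (k+1) : ℂ) = 2 * ((2*k+1).choose k : ℂ) := by
      have h1 : (2*k+1+1).choose (k+1) = (2*k+1).choose k + (2*k+1).choose (k+1) :=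
        Nat.choose_succ_succ (2*k+1) k
      have h2 : (2*k+1).choose (k+1) = (2*k+1).choose k := by
        rw [← Nat.choose_symm (by omega : k+1 ≤ 2*k+1)]
        congr 1; omega
      rw [h1, h2]; push_cast; ring
    have hkey := key (2*k+1) k z
    have L : (∑ j ∈ Finset.range (k+1), ((2*k+1+1).choose j : ℂ) * z ^ (2*k+1+1 - 2*j)) * z
        = ∑ j ∈ Finset.range (k+1), ((2*k+1+1).choose j : ℂ) * z ^ (2*k+1+2 - 2*j) := by
      rw [Finset.sum_mul]
      refine Finset.sum_congr rfl fun j hj => ?_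
      simp only [Finset.mem_range] at hj
      rw [mul_assoc, ← pow_succ]
      congr 2
      omega
    have R : z^2 * (∑ j ∈ Finset.range (k+1), ((2*k+1).choose j : ℂ) * z ^ (2*k+1 - 2*j))
        = ∑ j ∈ Finset.range (k+1), ((2*k+1).choose j : ℂ) * z ^ (2*k+1+2 - 2*j) := by
      rw [Finset.mul_sum]
      refine Finset.sum_congr rfl fun j hj => ?_
      simp only [Finset.mem_range] at hj
      rw [← mul_assoc, mul_comm (z^2), mul_assoc, ← pow_add]
      congr 2
      omega
    have T : ∑ j ∈ Finset.range (k+1), ((2*k+1).choose j : ℂ) * z ^ (2*k+1 - 2*j)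
        = (∑ j ∈ Finset.range k, ((2*k+1).choose j : ℂ) * z ^ (2*k+1 - 2*j))
          + ((2*k+1).choose k : ℂ) * z := by
      rw [Finset.sum_range_succ]
      have : 2*k+1 - 2*k = 1 := by omega
      rw [this, pow_one]
    have main : (∑ j ∈ Finset.range (k+1), ((2*k+1+1).choose j : ℂ) * z ^ (2*k+1+1 - 2*j)) * z
        = (z^2+1) * (∑ j ∈ Finset.range (k+1), ((2*k+1).choose j : ℂ) * z ^ (2*k+1 - 2*j))
          - ((2*k+1).choose k : ℂ) * z := by
      rw [L]
      linear_combination hkey - R - T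
    field_simp
    linear_combination ((2:ℂ)^(k*2)*4) * main + (z*(2:ℂ)^(k*2)*2) * hc
  · -- m = 2k+1, goal about G (2k+3), G (2k+2)
    subst hk
    have hk2 : 2*k+1+1+1 = 2*k+3 := by ring
    have hk3 : 2*k+1+1 = 2*k+2 := by ring
    rw [hk2, hk3]
    have he1 : Even (2*k+2) := ⟨k+1, by ring⟩
    have he2 : ¬ Even (2*k+3) := by simp [Nat.even_iff]
    have hr1 : (2*k+3-1)/2 + 1 = k+2 := by omega
    have hr2 : (2*k+2-1)/2 + 1 = k+1 := by omega
    have hd : (2*k+2)/2 = k+1 := by omega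
    simp only [G, a, if_neg (by omega : ¬ (2*k+3 = 0)), if_neg (by omega : ¬ (2*k+2 = 0)),
      if_pos he1, if_neg he2, hr1, hr2, hd, phi]
    have hkey := key (2*k+2) (k+1) z
    have hexp : ∀ j : ℕ, 2*k+2+2 - 2*j = 2*k+4 - 2*j := by omega
    simp only [hexp, show 2*k+2+1 = 2*k+3 from rfl] at hkey
    have L : (∑ j ∈ Finset.range (k+2), ((2*k+3).choose j : ℂ) * z ^ (2*k+3 - 2*j)) * z
        = ∑ j ∈ Finset.range (k+2), ((2*k+3).choose j : ℂ) * z ^ (2*k+4 - 2*j) := by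
      rw [Finset.sum_mul]
      refine Finset.sum_congr rfl fun j hj => ?_
      simp only [Finset.mem_range] at hj
      rw [mul_assoc, ← pow_succ]
      congr 2
      omega
    have R : z^2 * (∑ j ∈ Finset.range (k+1), ((2*k+2).choose j : ℂ) * z ^ (2*k+2 - 2*j))
        = ∑ j ∈ Finset.range (k+1), ((2*k+2).choose j : ℂ) * z ^ (2*k+4 - 2*j) := by
      rw [Finset.mul_sum]
      refine Finset.sum_congr rfl fun j hj => ?_
      simp only [Finset.mem_range] at hj
      rw [← mul_assoc, mul_comm (z^2), mul_assoc, ← pow_add]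
      congr 2
      omega
    have T : ∑ j ∈ Finset.range (k+2), ((2*k+2).choose j : ℂ) * z ^ (2*k+4 - 2*j)
        = (∑ j ∈ Finset.range (k+1), ((2*k+2).choose j : ℂ) * z ^ (2*k+4 - 2*j))
          + ((2*k+2).choose (k+1) : ℂ) * z^2 := by
      rw [Finset.sum_range_succ]
      have : 2*k+4 - 2*(k+1) = 2 := by omega
      rw [this]
    have main : (∑ j ∈ Finset.range (k+2), ((2*k+3).choose j : ℂ) * z ^ (2*k+3 - 2*j)) * z
        = (z^2+1) * (∑ j ∈ Finset.range (k+1), ((2*k+2).choose j : ℂ) * z ^ (2*k+2 - 2*j))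
          + ((2*k+2).choose (k+1) : ℂ) * z^2 := by
      rw [L]
      linear_combination hkey + T - R
    field_simp
    linear_combination ((2:ℂ)^(k*2)*8) * main
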